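/- arXiv:1906.00752 — 3 statements merged into one kernel-verified Lean document; each statement's English description precedes it below -/
import Mathlib

section
/- For the uniform binary case with n = 2\nu + 1 odd, the characteristic function of S is \phi(\theta) = \prod_{k=1}^{\nu} \cos^2(k\theta). -/
open Finset

/-- Kendall score S = S⁺ - S⁻ of a finite sequence: S⁺ counts the pairs of positions in which
the earlier element exceeds the later one, S⁻ those in which the earlier element is smaller
(the paper's convention: S(0 1 1 2 0 2 1) = 5 - 11 = -6). -/
def kendallS {n : ℕ} {α : Type*} [LinearOrder α] (x : Fin n → α) : ℤ :=
  ((Finset.univ.filter (fun p : Fin n × Fin n => p.2 < p.1 ∧ x p.1 < x p.2)).card : ℤ) -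
  ((Finset.univ.filter (fun p : Fin n × Fin n => p.2 < p.1 ∧ x p.2 < x p.1)).card : ℤ)
lemma card_cons_aux {n : ℕ} {α : Type*} [LinearOrder α] (b : α) (x : Fin n → α) :
    (Finset.univ.filter (fun p : Fin (n+1) × Fin (n+1) =>
        p.2 < p.1 ∧ (Fin.cons b x : Fin (n+1) → α) p.1 < (Fin.cons b x : Fin (n+1) → α) p.2)).card
      = (Finset.univ.filter (fun p : Fin n × Fin n => p.2 < p.1 ∧ x p.1 < x p.2)).card
        + (Finset.univ.filter (fun i => x i < b)).card := by
  simp only [Finset.card_filter, Fintype.sum_prod_type, Fin.sum_univ_succ,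
    Fin.cons_zero, Fin.cons_succ, Fin.not_lt_zero, Fin.succ_pos, Fin.succ_lt_succ_iff,
    false_and, if_false, true_and, lt_irrefl]
  simp [Finset.sum_add_distrib, Nat.add_comm]

lemma kendallS_cons {n : ℕ} {α : Type*} [LinearOrder α] (b : α) (x : Fin n → α) :
    kendallS (Fin.cons b x) = kendallS x
      + ((Finset.univ.filter (fun i => x i < b)).card : ℤ)
      - ((Finset.univ.filter (fun i => b < x i)).card : ℤ) := by
  unfold kendallS
  rw [card_cons_aux b x]
  have h2 : (Finset.univ.filter (fun p : Fin (n+1) × Fin (n+1) =>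
        p.2 < p.1 ∧ (Fin.cons b x : Fin (n+1) → α) p.2 < (Fin.cons b x : Fin (n+1) → α) p.1)).card
      = (Finset.univ.filter (fun p : Fin n × Fin n => p.2 < p.1 ∧ x p.2 < x p.1)).card
        + (Finset.univ.filter (fun i => b < x i)).card := by
    simp only [Finset.card_filter, Fintype.sum_prod_type, Fin.sum_univ_succ,
      Fin.cons_zero, Fin.cons_succ, Fin.not_lt_zero, Fin.succ_pos, Fin.succ_lt_succ_iff,
      false_and, if_false, true_and, lt_irrefl]
    simp [Finset.sum_add_distrib, Nat.add_comm]
  rw [h2]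
  push_cast
  ring

def onesC {n : ℕ} (x : Fin n → Fin 2) : ℕ := (Finset.univ.filter fun i => x i = 1).card

lemma lt_zero_empty {n : ℕ} (y : Fin n → Fin 2) :
    (Finset.univ.filter fun i => y i < 0) = ∅ := by
  simp [Finset.filter_eq_empty_iff]

lemma zero_lt_filter {n : ℕ} (y : Fin n → Fin 2) :
    (Finset.univ.filter fun i => (0 : Fin 2) < y i) = (Finset.univ.filter fun i => y i = 1) := by
  apply Finset.filter_congr
  intro i _
  have : ∀ a : Fin 2, ((0:Fin 2) < a ↔ a = 1) := by decide
  exact this (y i)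

lemma lt_one_filter {n : ℕ} (y : Fin n → Fin 2) :
    (Finset.univ.filter fun i => y i < 1) = (Finset.univ.filter fun i => y i = 0) := by
  apply Finset.filter_congr
  intro i _
  have : ∀ a : Fin 2, (a < (1:Fin 2) ↔ a = 0) := by decide
  exact this (y i)

lemma one_lt_empty {n : ℕ} (y : Fin n → Fin 2) :
    (Finset.univ.filter fun i => (1:Fin 2) < y i) = ∅ := by
  simp [Finset.filter_eq_empty_iff]
  intro i
  have : ∀ a : Fin 2, a ≤ 1 := by decide
  exact this (y i)

lemma zeros_card {n : ℕ} (y : Fin n → Fin 2) :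
    ((Finset.univ.filter fun i => y i = 0).card : ℤ) = (n : ℤ) - onesC y := by
  have h := Finset.card_filter_add_card_filter_not (s := (Finset.univ : Finset (Fin n)))
      (p := fun i => y i = 1)
  have h0 : (Finset.univ.filter fun i => ¬ y i = 1) = (Finset.univ.filter fun i => y i = 0) := by
    apply Finset.filter_congr
    intro i _
    have : ∀ a : Fin 2, (¬ a = 1 ↔ a = 0) := by decide
    exact this (y i)
  rw [h0] at h
  simp only [Finset.card_univ, Fintype.card_fin] at h
  unfold onesC
  omega

lemma kendallS_cons_zero {n : ℕ} (y : Fin n → Fin 2) :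
    kendallS (Fin.cons 0 y : Fin (n+1) → Fin 2) = kendallS y - onesC y := by
  rw [kendallS_cons, lt_zero_empty, zero_lt_filter]
  simp [onesC]

lemma kendallS_cons_one {n : ℕ} (y : Fin n → Fin 2) :
    kendallS (Fin.cons 1 y : Fin (n+1) → Fin 2) = kendallS y + ((n : ℤ) - onesC y) := by
  rw [kendallS_cons, lt_one_filter, one_lt_empty, zeros_card]
  simp

lemma onesC_cons_zero {n : ℕ} (y : Fin n → Fin 2) :
    onesC (Fin.cons 0 y : Fin (n+1) → Fin 2) = onesC y := by
  unfold onesC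
  simp only [Finset.card_filter, Fin.sum_univ_succ, Fin.cons_zero, Fin.cons_succ]
  simp

lemma onesC_cons_one {n : ℕ} (y : Fin n → Fin 2) :
    onesC (Fin.cons 1 y : Fin (n+1) → Fin 2) = onesC y + 1 := by
  unfold onesC
  simp only [Finset.card_filter, Fin.sum_univ_succ, Fin.cons_zero, Fin.cons_succ]
  simp [Nat.add_comm]

lemma key (q : ℂ) (hq : q ≠ 0) :
    ∀ n : ℕ, ∀ t : ℂ,
      (∑ x : Fin n → Fin 2, t ^ onesC x * q ^ (kendallS x))
        = ∏ j ∈ Finset.range n, (1 + t * q ^ ((n : ℤ) - 1 - 2 * j)) := by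
  intro n
  induction n with
  | zero =>
      intro t
      simp [kendallS, onesC]
  | succ n ih =>
      intro t
      rw [← Equiv.sum_comp (Fin.consEquiv (fun _ : Fin (n+1) => Fin 2))
        (fun x => t ^ onesC x * q ^ (kendallS x))]
      rw [Fintype.sum_prod_type]
      rw [Fin.sum_univ_two]
      have hc : ∀ (b : Fin 2) (y : Fin n → Fin 2),
          (Fin.consEquiv fun _ : Fin (n+1) => Fin 2) (b, y) = Fin.cons b y := fun _ _ => rfl
      simp only [hc, onesC_cons_zero, onesC_cons_one, kendallS_cons_zero, kendallS_cons_one]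
      have h1 : ∀ x : Fin n → Fin 2,
          t ^ onesC x * q ^ (kendallS x - (onesC x : ℤ))
            = (t * q⁻¹) ^ onesC x * q ^ kendallS x := by
        intro x
        rw [zpow_sub₀ hq, zpow_natCast, mul_pow, inv_pow, div_eq_mul_inv]
        ring
      have h2 : ∀ x : Fin n → Fin 2,
          t ^ (onesC x + 1) * q ^ (kendallS x + ((n : ℤ) - (onesC x : ℤ)))
            = (t * q ^ (n : ℤ)) * ((t * q⁻¹) ^ onesC x * q ^ kendallS x) := by
        intro x
        rw [zpow_add₀ hq, zpow_sub₀ hq]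
        simp only [zpow_natCast]
        rw [mul_pow, inv_pow, div_eq_mul_inv, pow_succ]
        ring
      simp only [h1, h2]
      rw [← Finset.mul_sum, ih (t * q⁻¹), Finset.prod_range_succ']
      have hf0 : (1 + t * q ^ ((↑(n+1) : ℤ) - 1 - 2 * ((0:ℕ) : ℤ))) = 1 + t * q ^ (n : ℤ) := by
        norm_num
      have hfj : ∀ j ∈ Finset.range n,
          (1 + t * q ^ ((↑(n+1) : ℤ) - 1 - 2 * ((j+1 : ℕ) : ℤ)))
            = 1 + (t * q⁻¹) * q ^ ((n : ℤ) - 1 - 2 * (j : ℤ)) := by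
        intro j _
        have he : ((n+1 : ℕ) : ℤ) - 1 - 2 * ((j+1 : ℕ) : ℤ) = ((n : ℤ) - 1 - 2 * j) - 1 := by
          push_cast; ring
        rw [he, zpow_sub_one₀ hq]
        ring
      rw [Finset.prod_congr rfl hfj, hf0]
      ring

lemma cos_helper (θ : ℝ) (m : ℕ) :
    (1 + Complex.exp ((θ:ℂ)*Complex.I) ^ (2*(m:ℤ)))
      * (1 + Complex.exp ((θ:ℂ)*Complex.I) ^ (-(2*(m:ℤ))))
      = 4 * Complex.cos ((m:ℂ)*θ) ^ 2 := by
  set q := Complex.exp ((θ:ℂ)*Complex.I) with hqdef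
  set u := Complex.exp ((m:ℂ)*((θ:ℂ)*Complex.I)) with hudef
  have hu0 : u ≠ 0 := Complex.exp_ne_zero _
  have h1 : q ^ (2*(m:ℤ)) = u^2 := by
    rw [hqdef, hudef, ← Complex.exp_int_mul, ← Complex.exp_nat_mul]
    congr 1
    push_cast
    ring
  have hcos : Complex.cos ((m:ℂ)*θ) = (u + u⁻¹)/2 := by
    rw [Complex.cos, hudef, ← Complex.exp_neg]
    congr 2 <;> ring
  rw [zpow_neg, h1, hcos]
  field_simp
  ring

lemma prod_ident (θ : ℝ) : ∀ ν : ℕ,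
    ∏ j ∈ Finset.range (2*ν+1),
        (1 + Complex.exp ((θ:ℂ)*Complex.I) ^ ((2*(ν:ℤ)) - 2*(j:ℤ)))
      = 2^(2*ν+1) * ∏ k ∈ Finset.Icc 1 ν, Complex.cos ((k:ℂ)*θ)^2 := by
  intro ν
  induction ν with
  | zero => norm_num
  | succ ν ih =>
      set q := Complex.exp ((θ:ℂ)*Complex.I) with hqdef
      have hrange : 2*(ν+1)+1 = (2*ν+1) + 1 + 1 := by ring
      rw [hrange, Finset.prod_range_succ, Finset.prod_range_succ']
      have hmid : ∀ j ∈ Finset.range (2*ν+1),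
          (1 + q ^ ((2*((ν+1:ℕ):ℤ)) - 2*((j+1:ℕ):ℤ)))
            = 1 + q ^ ((2*(ν:ℤ)) - 2*(j:ℤ)) := by
        intro j _
        congr 2
        push_cast
        ring
      rw [Finset.prod_congr rfl hmid, ih]
      have hIcc : Finset.Icc 1 (ν+1) = insert (ν+1) (Finset.Icc 1 ν) := by
        ext k
        simp only [Finset.mem_Icc, Finset.mem_insert]
        omega
      rw [hIcc, Finset.prod_insert (by simp)]
      have h0 : ((2*((ν+1:ℕ):ℤ)) - 2*((0:ℕ):ℤ)) = 2*((ν+1:ℕ):ℤ) := by push_cast; ring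
      have hl : ((2*((ν+1:ℕ):ℤ)) - 2*((2*ν+2:ℕ):ℤ)) = -(2*((ν+1:ℕ):ℤ)) := by push_cast; ring
      rw [h0, hl]
      have hch := cos_helper θ (ν+1)
      rw [← hqdef] at hch
      linear_combination (2 ^ (2*ν+1) * ∏ k ∈ Finset.Icc 1 ν, Complex.cos ((k:ℂ)*(θ:ℂ))^2) * hch

/-- Characteristic function of S for n = 2ν+1 fair coin flips: φ(θ) = ∏ₖ cos²(kθ). -/
theorem kendall_char_odd (ν : ℕ) (θ : ℝ) :
    ∑ j : Fin (2 * ν + 1) → Fin 2,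
        (1 / 2 ^ (2 * ν + 1) : ℂ) * Complex.exp ((θ : ℂ) * Complex.I * (kendallS j : ℂ))
      = ∏ k ∈ Finset.Icc 1 ν, Complex.cos ((k : ℂ) * (θ : ℂ)) ^ 2 := by
  set q := Complex.exp ((θ:ℂ)*Complex.I) with hqdef
  have hq : q ≠ 0 := Complex.exp_ne_zero _
  have hexp : ∀ x : Fin (2*ν+1) → Fin 2,
      Complex.exp ((θ : ℂ) * Complex.I * (kendallS x : ℂ)) = q ^ (kendallS x) := by
    intro x
    rw [hqdef, ← Complex.exp_int_mul]
    congr 1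
    ring
  have hkey := key q hq (2*ν+1) 1
  simp only [one_pow, one_mul] at hkey
  calc ∑ x : Fin (2*ν+1) → Fin 2,
          (1 / 2 ^ (2 * ν + 1) : ℂ) * Complex.exp ((θ : ℂ) * Complex.I * (kendallS x : ℂ))
      = (1 / 2 ^ (2 * ν + 1) : ℂ) * ∑ x : Fin (2*ν+1) → Fin 2, q ^ (kendallS x) := by
        rw [Finset.mul_sum]
        exact Finset.sum_congr rfl fun x _ => by rw [hexp x]
    _ = (1 / 2 ^ (2 * ν + 1) : ℂ)
          * ∏ j ∈ Finset.range (2*ν+1), (1 + q ^ (((2*ν+1 : ℕ) : ℤ) - 1 - 2 * (j:ℤ))) := by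
        rw [hkey]
    _ = (1 / 2 ^ (2 * ν + 1) : ℂ)
          * ∏ j ∈ Finset.range (2*ν+1), (1 + q ^ ((2*(ν:ℤ)) - 2*(j:ℤ))) := by
        congr 1
        refine Finset.prod_congr rfl fun j _ => ?_
        congr 2
        push_cast
        ring
    _ = ∏ k ∈ Finset.Icc 1 ν, Complex.cos ((k : ℂ) * (θ : ℂ)) ^ 2 := by
        rw [hqdef] at *
        rw [prod_ident θ ν]
        field_simp
        simp only [mul_comm]
end

section
/- For biased binary sequences with n = 2\nu even, the probability generating function of S equals \prod_{k=1}^{\nu} (pq x^{1-2k} + p^2 + q^2 + pq x^{2k-1}). -/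
open Finset

/-- For a binary sequence, the Kendall score is a linear statistic:
`S = ∑ₖ (n - 1 - 2k) xₖ`. -/
lemma kendallS_binary {n : ℕ} (x : Fin n → Fin 2) :
    kendallS x = ∑ k : Fin n, ((n : ℤ) - 1 - 2 * (k : ℤ)) * ((x k : ℕ) : ℤ) := by
  have key : ∀ a b : Fin 2,
      ((if a < b then (1:ℤ) else 0) - (if b < a then (1:ℤ) else 0)) = ((b:ℕ):ℤ) - ((a:ℕ):ℤ) := by
    decide
  have hsplit : ∀ (c : Prop) [Decidable c] (a b : ℤ),
      (if c then a - b else 0) = (if c then a else 0) - (if c then b else 0) := by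
    intros c _ a b; split <;> simp
  unfold kendallS
  rw [Finset.card_filter, Finset.card_filter]
  push_cast
  rw [← Finset.sum_sub_distrib]
  have step1 : ∀ p : Fin n × Fin n,
      ((if p.2 < p.1 ∧ x p.1 < x p.2 then (1:ℤ) else 0)
        - (if p.2 < p.1 ∧ x p.2 < x p.1 then (1:ℤ) else 0))
      = (if p.2 < p.1 then ((x p.2 : ℕ):ℤ) - ((x p.1 : ℕ):ℤ) else 0) := by
    intro p
    by_cases h : p.2 < p.1
    · simp only [h, true_and, if_true]
      exact key _ _
    · simp [h]
  calc ∑ p : Fin n × Fin n,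
        ((if p.2 < p.1 ∧ x p.1 < x p.2 then (1:ℤ) else 0)
          - (if p.2 < p.1 ∧ x p.2 < x p.1 then (1:ℤ) else 0))
      = ∑ p : Fin n × Fin n, (if p.2 < p.1 then ((x p.2 : ℕ):ℤ) - ((x p.1 : ℕ):ℤ) else 0) :=
        Finset.sum_congr rfl (fun p _ => step1 p)
    _ = ∑ i : Fin n, ∑ j : Fin n, (if j < i then ((x j : ℕ):ℤ) - ((x i : ℕ):ℤ) else 0) := by
        rw [Fintype.sum_prod_type]
    _ = ∑ i : Fin n, ∑ j : Fin n,
          ((if j < i then ((x j : ℕ):ℤ) else 0) - (if j < i then ((x i : ℕ):ℤ) else 0)) := by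
        simp only [hsplit]
    _ = (∑ i : Fin n, ∑ j : Fin n, (if j < i then ((x j : ℕ):ℤ) else 0))
        - ∑ i : Fin n, ∑ j : Fin n, (if j < i then ((x i : ℕ):ℤ) else 0) := by
        simp only [Finset.sum_sub_distrib]
    _ = (∑ j : Fin n, ((n:ℤ) - 1 - (j:ℤ)) * ((x j : ℕ):ℤ))
        - ∑ i : Fin n, (i:ℤ) * ((x i : ℕ):ℤ) := by
        congr 1
        · rw [Finset.sum_comm]
          refine Finset.sum_congr rfl (fun j _ => ?_)
          rw [← Finset.sum_filter, Finset.filter_lt_eq_Ioi, Finset.sum_const, Fin.card_Ioi,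
            nsmul_eq_mul]
          congr 1
          have := j.isLt
          omega
        · refine Finset.sum_congr rfl (fun i _ => ?_)
          rw [← Finset.sum_filter, Finset.filter_gt_eq_Iio, Finset.sum_const, Fin.card_Iio,
            nsmul_eq_mul]
    _ = ∑ k : Fin n, ((n : ℤ) - 1 - 2 * (k : ℤ)) * ((x k : ℕ) : ℤ) := by
        rw [← Finset.sum_sub_distrib]
        exact Finset.sum_congr rfl (fun k _ => by ring)

/-- An integer power of a finite sum of exponents is the product of the powers. -/
lemma zpow_finset_sum {ι : Type*} (s : Finset ι) (f : ι → ℤ) (y : ℝ) (hy : y ≠ 0) :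
    y ^ (∑ i ∈ s, f i) = ∏ i ∈ s, y ^ f i := by
  classical
  induction s using Finset.cons_induction with
  | empty => simp
  | cons a s ha ih => rw [Finset.sum_cons, Finset.prod_cons, zpow_add₀ hy, ih]

/-- Biased binary case, n = 2ν even: the PGF of S is ∏ₖ (pq x^{1-2k} + p² + q² + pq x^{2k-1}). -/
theorem kendall_pgf_biased_even (ν : ℕ) (p q : ℝ) (hp : 0 ≤ p) (hq : 0 ≤ q)
    (hpq : p + q = 1) (y : ℝ) (hy : y ≠ 0) :
    ∑ x : Fin (2 * ν) → Fin 2,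
        (∏ k, if x k = 0 then p else q) * y ^ kendallS x
      = ∏ k ∈ Finset.Icc 1 ν,
          (p * q * y ^ (1 - 2 * (k : ℤ)) + p ^ 2 + q ^ 2 + p * q * y ^ (2 * (k : ℤ) - 1)) := by
  set n := 2 * ν with hn
  have e : Fin n → ℤ := fun k => (n : ℤ) - 1 - 2 * (k : ℤ)
  -- Step 1: per-sequence factorization
  have step1 : ∀ x : Fin n → Fin 2,
      (∏ k, if x k = 0 then p else q) * y ^ kendallS x
        = ∏ k : Fin n, ((if x k = 0 then p else q)
            * y ^ (((n : ℤ) - 1 - 2 * (k : ℤ)) * ((x k : ℕ) : ℤ))) := by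
    intro x
    rw [kendallS_binary x, zpow_finset_sum _ _ _ hy, Finset.prod_mul_distrib]
  rw [Finset.sum_congr rfl (fun x _ => step1 x)]
  -- Step 2: swap sum and product
  rw [← Fintype.prod_sum (f := fun (k : Fin n) (v : Fin 2) =>
    (if v = 0 then p else q) * y ^ (((n : ℤ) - 1 - 2 * (k : ℤ)) * ((v : ℕ) : ℤ)))]
  have step2 : (∏ k : Fin n, ∑ v : Fin 2,
      ((if v = 0 then p else q) * y ^ (((n : ℤ) - 1 - 2 * (k : ℤ)) * ((v : ℕ) : ℤ))))
      = ∏ k : Fin n, (p + q * y ^ ((2 * (ν:ℤ)) - 1 - 2 * (k : ℤ))) := by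
    refine Finset.prod_congr rfl (fun k _ => ?_)
    rw [Fin.sum_univ_two]
    have : ((n : ℤ)) = 2 * (ν : ℤ) := by rw [hn]; push_cast; ring
    rw [this]
    norm_num
  rw [step2]
  -- Step 3: reindex the product
  have hpair : ∀ i : ℕ, (p + q * y ^ (2 * (i:ℤ) + 1)) * (p + q * y ^ (-(2 * (i:ℤ) + 1)))
      = p * q * y ^ (-(2 * (i:ℤ) + 1)) + p ^ 2 + q ^ 2 + p * q * y ^ (2 * (i:ℤ) + 1) := by
    intro i
    have h1 : y ^ (2 * (i:ℤ) + 1) * y ^ (-(2 * (i:ℤ) + 1)) = 1 := by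
      rw [← zpow_add₀ hy, show (2*(i:ℤ)+1) + (-(2*(i:ℤ)+1)) = 0 by ring, zpow_zero]
    set t := y ^ (2 * (i:ℤ) + 1)
    set u := y ^ (-(2 * (i:ℤ) + 1))
    linear_combination q ^ 2 * h1
  rw [Fin.prod_univ_eq_prod_range (fun k : ℕ => (p + q * y ^ ((2 * (ν:ℤ)) - 1 - 2 * (k : ℤ)))),
    hn, two_mul, Finset.prod_range_add]
  have hfirst : (∏ i ∈ Finset.range ν, (p + q * y ^ ((2 * (ν:ℤ)) - 1 - 2 * ((i:ℕ) : ℤ))))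
      = ∏ i ∈ Finset.range ν, (p + q * y ^ (2 * (i:ℤ) + 1)) := by
    rw [← Finset.prod_range_reflect]
    refine Finset.prod_congr rfl (fun j hj => ?_)
    have hj' := Finset.mem_range.mp hj
    congr 2
    have : ((ν - 1 - j : ℕ) : ℤ) = (ν : ℤ) - 1 - j := by omega
    rw [this]; ring
  have hsecond : (∏ i ∈ Finset.range ν, (p + q * y ^ ((2 * (ν:ℤ)) - 1 - 2 * ((ν + i : ℕ) : ℤ))))
      = ∏ i ∈ Finset.range ν, (p + q * y ^ (-(2 * (i:ℤ) + 1))) := by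
    refine Finset.prod_congr rfl (fun j hj => ?_)
    congr 2
    push_cast; ring
  rw [hfirst, hsecond, ← Finset.prod_mul_distrib]
  rw [← Finset.Ico_add_one_right_eq_Icc, Finset.prod_Ico_eq_prod_range]
  refine Finset.prod_congr rfl (fun i hi => ?_)
  rw [hpair i]
  have e1 : (1 : ℤ) - 2 * ((1 + i : ℕ) : ℤ) = -(2 * (i:ℤ) + 1) := by push_cast; ring
  have e2 : (2 : ℤ) * ((1 + i : ℕ) : ℤ) - 1 = 2 * (i:ℤ) + 1 := by push_cast; ring
  rw [e1, e2]
end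

section
/- For biased binary sequences (P(0)=p, P(1)=q, p+q=1, independent), the variance of the Kendall score S equals n(n^2-1) pq / 3. -/
open Finset

/-! ### Auxiliary sum identities -/

private lemma sum_range_id2 (n : ℕ) : 2 * ∑ k ∈ Finset.range n, (k:ℤ) = n * (n-1) := by
  induction n with
  | zero => simp
  | succ m ih =>
    rw [Finset.sum_range_succ]
    push_cast
    push_cast at ih
    ring_nf
    ring_nf at ih
    linarith

private lemma sum_range_sq2 (n : ℕ) :
    6 * ∑ k ∈ Finset.range n, (k:ℤ)^2 = n * (n-1) * (2*n-1) := by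
  induction n with
  | zero => simp
  | succ m ih =>
    rw [Finset.sum_range_succ]
    push_cast
    push_cast at ih
    ring_nf
    ring_nf at ih
    linarith

private lemma coeff_sq_sum (n : ℕ) :
    3 * ∑ k ∈ Finset.range n, ((n:ℤ)-1-2*k)^2 = n * ((n:ℤ)^2 - 1) := by
  have h1 := sum_range_id2 n
  have h2 := sum_range_sq2 n
  have hT : ∑ k ∈ Finset.range n, ((n:ℤ)-1-2*k)^2
      = n * ((n:ℤ)-1)^2 - 4*((n:ℤ)-1) * (∑ k ∈ Finset.range n, (k:ℤ))
        + 4 * ∑ k ∈ Finset.range n, (k:ℤ)^2 := by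
    have : ∀ k ∈ Finset.range n, ((n:ℤ)-1-2*k)^2
        = ((n:ℤ)-1)^2 - 4*((n:ℤ)-1) * k + 4 * k^2 := by
      intro k _; ring
    rw [Finset.sum_congr rfl this]
    rw [Finset.sum_add_distrib, Finset.sum_sub_distrib, ← Finset.mul_sum, ← Finset.mul_sum,
      Finset.sum_const, Finset.card_range]
    ring
  linear_combination 3 * hT - 6*((n:ℤ)-1) * h1 + 2 * h2

/-! ### The Kendall score of a binary string is a linear form in the entries -/

private lemma kendall_linear {n : ℕ} (x : Fin n → Fin 2) :
    kendallS x = ∑ k : Fin n, ((n:ℤ) - 1 - 2*(k:ℤ)) * ((x k : ℕ) : ℤ) := by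
  have step1 : kendallS x = ∑ p ∈ univ.filter (fun p : Fin n × Fin n => p.2 < p.1),
      (((x p.2 : ℕ) : ℤ) - ((x p.1 : ℕ) : ℤ)) := by
    unfold kendallS
    have e1 : (univ.filter (fun p : Fin n × Fin n => p.2 < p.1 ∧ x p.1 < x p.2))
        = (univ.filter (fun p : Fin n × Fin n => p.2 < p.1)).filter
            (fun p => x p.1 < x p.2) := by
      rw [Finset.filter_filter]
    have e2 : (univ.filter (fun p : Fin n × Fin n => p.2 < p.1 ∧ x p.2 < x p.1))
        = (univ.filter (fun p : Fin n × Fin n => p.2 < p.1)).filter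
            (fun p => x p.2 < x p.1) := by
      rw [Finset.filter_filter]
    rw [e1, e2, Finset.card_filter, Finset.card_filter]
    push_cast
    rw [← Finset.sum_sub_distrib]
    apply Finset.sum_congr rfl
    intro pp _
    generalize x pp.1 = a
    generalize x pp.2 = b
    fin_cases a <;> fin_cases b <;> simp
  rw [step1, Finset.sum_filter, Fintype.sum_prod_type]
  have inner : ∀ i : Fin n, (∑ j : Fin n, if j < i then (((x j : ℕ):ℤ) - ((x i : ℕ):ℤ)) else 0)
      = (∑ j : Fin n, if j < i then ((x j : ℕ):ℤ) else 0) - (i : ℤ) * ((x i : ℕ):ℤ) := by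
    intro i
    have : (∑ j : Fin n, if j < i then (((x j : ℕ):ℤ) - ((x i : ℕ):ℤ)) else 0)
        = (∑ j : Fin n, if j < i then ((x j : ℕ):ℤ) else 0)
          - (∑ j : Fin n, if j < i then ((x i : ℕ):ℤ) else 0) := by
      rw [← Finset.sum_sub_distrib]
      apply Finset.sum_congr rfl
      intro j _
      by_cases h : j < i <;> simp [h]
    rw [this]
    congr 1
    rw [← Finset.sum_filter, Finset.filter_gt_eq_Iio, Finset.sum_const, Fin.card_Iio]
    simp [mul_comm]
  simp only [inner]
  rw [Finset.sum_sub_distrib, Finset.sum_comm]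
  have outer : ∀ j : Fin n, (∑ i : Fin n, if j < i then ((x j : ℕ):ℤ) else 0)
      = ((n : ℤ) - 1 - (j : ℤ)) * ((x j : ℕ):ℤ) := by
    intro j
    rw [← Finset.sum_filter, Finset.filter_lt_eq_Ioi, Finset.sum_const, Fin.card_Ioi]
    have hj : (j : ℕ) < n := j.2
    have : ((n - 1 - (j:ℕ) : ℕ) : ℤ) = (n:ℤ) - 1 - (j:ℤ) := by omega
    rw [nsmul_eq_mul, this]
  rw [Finset.sum_congr rfl (fun j _ => outer j), ← Finset.sum_sub_distrib]
  apply Finset.sum_congr rfl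
  intro k _
  ring

/-! ### Expectations with respect to the product (Bernoulli) weights -/

private lemma sum_prod_fn {n : ℕ} (f : Fin n → Fin 2 → ℝ) :
    ∑ x : Fin n → Fin 2, ∏ k, f k (x k) = ∏ k, (f k 0 + f k 1) := by
  rw [← Fintype.prod_sum]
  exact Finset.prod_congr rfl fun k _ => Fin.sum_univ_two _

private lemma exp_single {n : ℕ} {p q : ℝ} (hpq : p + q = 1) (k : Fin n) :
    ∑ x : Fin n → Fin 2, (∏ j, if x j = 0 then p else q) * ((x k : ℕ) : ℝ) = q := by
  have h : ∀ x : Fin n → Fin 2, (∏ j, if x j = 0 then p else q) * ((x k : ℕ) : ℝ)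
      = ∏ j, ((if x j = 0 then p else q) * (if j = k then ((x j : ℕ) : ℝ) else 1)) := by
    intro x
    rw [Finset.prod_mul_distrib, Finset.prod_ite_eq' univ k (fun j => ((x j : ℕ) : ℝ))]
    simp
  simp only [h]
  rw [sum_prod_fn (fun j v => (if v = 0 then p else q) * (if j = k then ((v : ℕ) : ℝ) else 1))]
  have h2 : ∀ j : Fin n,
      ((if (0:Fin 2) = 0 then p else q) * (if j = k then (((0:Fin 2) : ℕ) : ℝ) else 1))
      + ((if (1:Fin 2) = 0 then p else q) * (if j = k then (((1:Fin 2) : ℕ) : ℝ) else 1))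
      = if j = k then q else 1 := by
    intro j
    by_cases hj : j = k <;> simp [hj, hpq]
  rw [Finset.prod_congr rfl (fun j _ => h2 j), Finset.prod_ite_eq' univ k (fun _ => q)]
  simp

private lemma exp_pair {n : ℕ} {p q : ℝ} (hpq : p + q = 1) (k l : Fin n) :
    ∑ x : Fin n → Fin 2, (∏ j, if x j = 0 then p else q) * ((x k : ℕ) : ℝ) * ((x l : ℕ) : ℝ)
      = if k = l then q else q * q := by
  by_cases hkl : k = l
  · subst hkl
    simp only [if_pos rfl]
    have hsq : ∀ x : Fin n → Fin 2,
        (∏ j, if x j = 0 then p else q) * ((x k : ℕ) : ℝ) * ((x k : ℕ) : ℝ)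
        = (∏ j, if x j = 0 then p else q) * ((x k : ℕ) : ℝ) := by
      intro x
      have : ((x k : ℕ) : ℝ) * ((x k : ℕ) : ℝ) = ((x k : ℕ) : ℝ) := by
        generalize x k = a; fin_cases a <;> norm_num
      rw [mul_assoc, this]
    simp only [hsq]
    exact exp_single hpq k
  · simp only [if_neg hkl]
    have h : ∀ x : Fin n → Fin 2,
        (∏ j, if x j = 0 then p else q) * ((x k : ℕ) : ℝ) * ((x l : ℕ) : ℝ)
        = ∏ j, ((if x j = 0 then p else q) * (if j = k then ((x j : ℕ) : ℝ) else 1)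
            * (if j = l then ((x j : ℕ) : ℝ) else 1)) := by
      intro x
      rw [Finset.prod_mul_distrib, Finset.prod_mul_distrib,
        Finset.prod_ite_eq' univ k (fun j => ((x j : ℕ) : ℝ)),
        Finset.prod_ite_eq' univ l (fun j => ((x j : ℕ) : ℝ))]
      simp
    simp only [h]
    rw [sum_prod_fn (fun j v => (if v = 0 then p else q) * (if j = k then ((v : ℕ) : ℝ) else 1)
      * (if j = l then ((v : ℕ) : ℝ) else 1))]
    have h2 : ∀ j : Fin n,
        ((if (0:Fin 2) = 0 then p else q) * (if j = k then (((0:Fin 2) : ℕ) : ℝ) else 1)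
          * (if j = l then (((0:Fin 2) : ℕ) : ℝ) else 1))
        + ((if (1:Fin 2) = 0 then p else q) * (if j = k then (((1:Fin 2) : ℕ) : ℝ) else 1)
          * (if j = l then (((1:Fin 2) : ℕ) : ℝ) else 1))
        = (if j = k then q else 1) * (if j = l then q else 1) := by
      intro j
      have hlk : l ≠ k := Ne.symm hkl
      by_cases hjk : j = k <;> by_cases hjl : j = l <;> simp [hjk, hjl, hpq, hkl, hlk]
    rw [Finset.prod_congr rfl (fun j _ => h2 j), Finset.prod_mul_distrib,
      Finset.prod_ite_eq' univ k (fun _ => q), Finset.prod_ite_eq' univ l (fun _ => q)]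
    simp

/-- Biased binary case: Var(S) = n(n²-1)pq/3. -/
theorem kendall_variance_biased (n : ℕ) (p q : ℝ) (hp : 0 ≤ p) (hq : 0 ≤ q)
    (hpq : p + q = 1) :
    (∑ x : Fin n → Fin 2, (∏ k, if x k = 0 then p else q) * (kendallS x : ℝ) ^ 2)
      - (∑ x : Fin n → Fin 2, (∏ k, if x k = 0 then p else q) * (kendallS x : ℝ)) ^ 2
    = (n : ℝ) * ((n : ℝ) ^ 2 - 1) * p * q / 3 := by
  have hk : ∀ x : Fin n → Fin 2, (kendallS x : ℝ)
      = ∑ k : Fin n, ((n:ℝ) - 1 - 2*((k:ℕ):ℝ)) * ((x k : ℕ) : ℝ) := by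
    intro x
    rw [kendall_linear x]
    push_cast
    ring
  have hz : ∑ k : Fin n, ((n:ℝ) - 1 - 2*((k:ℕ):ℝ)) = 0 := by
    rw [Fin.sum_univ_eq_sum_range (fun m => (n:ℝ) - 1 - 2*(m:ℝ)) n]
    have h1 : 2 * ∑ i ∈ Finset.range n, (i:ℝ) = n * ((n:ℝ)-1) := by
      have := congrArg (fun z : ℤ => (z:ℝ)) (sum_range_id2 n)
      push_cast at this
      linarith
    rw [Finset.sum_sub_distrib, Finset.sum_const, Finset.card_range, ← Finset.mul_sum,
      nsmul_eq_mul]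
    linarith
  have mean : (∑ x : Fin n → Fin 2, (∏ k, if x k = 0 then p else q) * (kendallS x : ℝ)) = 0 := by
    have hpt : ∀ x : Fin n → Fin 2, (∏ k, if x k = 0 then p else q) * (kendallS x : ℝ)
        = ∑ k : Fin n, ((n:ℝ) - 1 - 2*((k:ℕ):ℝ)) *
            ((∏ j, if x j = 0 then p else q) * ((x k : ℕ) : ℝ)) := by
      intro x
      rw [hk x, Finset.mul_sum]
      exact Finset.sum_congr rfl fun k _ => by ring
    rw [Finset.sum_congr rfl fun x _ => hpt x, Finset.sum_comm]
    have h1 : ∀ k : Fin n, (∑ x : Fin n → Fin 2, ((n:ℝ)-1-2*((k:ℕ):ℝ)) *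
        ((∏ j, if x j = 0 then p else q) * ((x k : ℕ):ℝ))) = ((n:ℝ)-1-2*((k:ℕ):ℝ)) * q := by
      intro k
      rw [← Finset.mul_sum, exp_single hpq k]
    rw [Finset.sum_congr rfl fun k _ => h1 k, ← Finset.sum_mul, hz, zero_mul]
  have second : (∑ x : Fin n → Fin 2, (∏ k, if x k = 0 then p else q) * (kendallS x : ℝ)^2)
      = (∑ k : Fin n, ((n:ℝ)-1-2*((k:ℕ):ℝ))^2) * (q * p) := by
    have hpt : ∀ x : Fin n → Fin 2, (∏ k, if x k = 0 then p else q) * (kendallS x : ℝ)^2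
        = ∑ k : Fin n, ∑ l : Fin n, ((n:ℝ)-1-2*((k:ℕ):ℝ)) * ((n:ℝ)-1-2*((l:ℕ):ℝ)) *
            ((∏ j, if x j = 0 then p else q) * ((x k : ℕ):ℝ) * ((x l : ℕ):ℝ)) := by
      intro x
      rw [hk x, pow_two, Finset.sum_mul_sum, Finset.mul_sum]
      refine Finset.sum_congr rfl fun k _ => ?_
      rw [Finset.mul_sum]
      exact Finset.sum_congr rfl fun l _ => by ring
    rw [Finset.sum_congr rfl fun x _ => hpt x, Finset.sum_comm]
    have h1 : ∀ k : Fin n, (∑ x : Fin n → Fin 2, ∑ l : Fin n,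
          ((n:ℝ)-1-2*((k:ℕ):ℝ)) * ((n:ℝ)-1-2*((l:ℕ):ℝ)) *
          ((∏ j, if x j = 0 then p else q) * ((x k : ℕ):ℝ) * ((x l : ℕ):ℝ)))
        = ((n:ℝ)-1-2*((k:ℕ):ℝ))^2 * (q * p) := by
      intro k
      rw [Finset.sum_comm]
      have h2 : ∀ l : Fin n, (∑ x : Fin n → Fin 2,
            ((n:ℝ)-1-2*((k:ℕ):ℝ)) * ((n:ℝ)-1-2*((l:ℕ):ℝ)) *
            ((∏ j, if x j = 0 then p else q) * ((x k : ℕ):ℝ) * ((x l : ℕ):ℝ)))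
          = ((n:ℝ)-1-2*((k:ℕ):ℝ)) * ((n:ℝ)-1-2*((l:ℕ):ℝ)) * (if k = l then q else q*q) := by
        intro l
        rw [← Finset.mul_sum, exp_pair hpq k l]
      rw [Finset.sum_congr rfl fun l _ => h2 l]
      have h3 : ∀ l : Fin n, ((n:ℝ)-1-2*((k:ℕ):ℝ)) * ((n:ℝ)-1-2*((l:ℕ):ℝ)) *
            (if k = l then q else q*q)
          = (((n:ℝ)-1-2*((k:ℕ):ℝ)) * (q*q)) * ((n:ℝ)-1-2*((l:ℕ):ℝ))
            + (if k = l then ((n:ℝ)-1-2*((k:ℕ):ℝ))^2 * (q*p) else 0) := by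
        intro l
        by_cases h : k = l
        · subst h
          rw [if_pos rfl, if_pos rfl]
          linear_combination (-((n:ℝ)-1-2*((k:ℕ):ℝ))^2 * q) * hpq
        · simp only [if_neg h, add_zero]
          ring
      rw [Finset.sum_congr rfl fun l _ => h3 l, Finset.sum_add_distrib, ← Finset.mul_sum,
        hz, mul_zero, zero_add, Finset.sum_ite_eq]
      simp
    rw [Finset.sum_congr rfl fun k _ => h1 k, ← Finset.sum_mul]
  rw [second, mean]
  have hT : ∑ k : Fin n, ((n:ℝ)-1-2*((k:ℕ):ℝ))^2 = (n:ℝ) * ((n:ℝ)^2 - 1) / 3 := by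
    rw [Fin.sum_univ_eq_sum_range (fun m => ((n:ℝ)-1-2*(m:ℝ))^2) n]
    have := congrArg (fun z : ℤ => (z:ℝ)) (coeff_sq_sum n)
    push_cast at this
    linarith
  rw [hT]
  ring
end
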